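/- Let G = A ∗ B be the free product of two groups A and B, with A and B identified with their images under the canonical (injective) embeddings into G. Then the free factor A is malnormal in G: for every g ∈ G ∖ A one has A ∩ g⁻¹ A g = {1}. (By symmetry the same holds for B.) -/

import Mathlib

open Monoid Monoid.CoprodI

set_option linter.unusedSectionVars false

namespace FPM

variable {ι : Type*} {G : ι → Type*} [∀ i, Group (G i)]
  [DecidableEq ι] [∀ i, DecidableEq (G i)]

theorem prod_inj {w₁ w₂ : Word G} (h : w₁.prod = w₂.prod) : w₁ = w₂ :=
  Word.equiv.symm.injective h

theorem equiv_prod (w : Word G) : Word.equiv (Word.prod w) = w :=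
  Word.equiv.apply_symm_apply w

theorem prod_equiv (g : CoprodI G) : Word.prod (Word.equiv g) = g :=
  Word.equiv.symm_apply_apply g

theorem eq_one_of_equiv_empty (g : CoprodI G) (h : Word.equiv g = Word.empty) : g = 1 := by
  have := prod_equiv g
  rw [h, Word.prod_empty] at this
  exact this.symm

theorem equiv_ne_empty (g : CoprodI G) (h : g ≠ 1) : Word.equiv g ≠ Word.empty :=
  fun he => h (eq_one_of_equiv_empty g he)

theorem fstIdx_equiv_of {i : ι} {b : G i} (hb : b ≠ 1) :
    (Word.equiv (of b)).fstIdx = some i := by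
  have hemp : (Word.empty : Word G).fstIdx ≠ some i := by
    simp [Word.fstIdx, Word.empty]
  have : Word.equiv (of b) = Word.cons b Word.empty hemp hb := by
    apply prod_inj
    rw [prod_equiv, Word.prod_cons, Word.prod_empty, mul_one]
  rw [this, Word.fstIdx_cons]

theorem neword_toWord_prod {i j : ι} (n : NeWord G i j) :
    Word.prod n.toWord = n.prod := rfl

theorem equiv_neword_prod {i j : ι} (n : NeWord G i j) :
    Word.equiv n.prod = n.toWord := by
  apply prod_inj
  rw [prod_equiv, neword_toWord_prod]

theorem neword_toWord_fstIdx {i j : ι} (n : NeWord G i j) :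
    n.toWord.fstIdx = some i := by
  simp [Word.fstIdx, NeWord.toWord]

theorem neword_inv_length {i j : ι} (n : NeWord G i j) :
    n.inv.toList.length = n.toList.length := by
  induction n with
  | singleton x h => rfl
  | append w₁ hne w₂ ih₁ ih₂ =>
    simp [NeWord.inv, ih₁, ih₂, Nat.add_comm]

theorem core {i : ι} (g : CoprodI G) (hg1 : g ≠ 1)
    (h1 : (Word.equiv g).fstIdx ≠ some i)
    (h2 : (Word.equiv g⁻¹).fstIdx ≠ some i)
    {a b : G i} (ha : a ≠ 1) : g * of a * g⁻¹ ≠ of b := by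
  intro heq
  obtain ⟨j, k, n, hn⟩ := NeWord.of_word (Word.equiv g) (equiv_ne_empty g hg1)
  have hgprod : n.prod = g := by
    rw [← neword_toWord_prod, hn, prod_equiv]
  have hji : j ≠ i := by
    intro hj
    apply h1
    rw [← hn, neword_toWord_fstIdx, hj]
  have hinv : Word.equiv g⁻¹ = n.inv.toWord := by
    rw [← hgprod, ← NeWord.inv_prod, equiv_neword_prod]
  have hki : k ≠ i := by
    intro hk
    apply h2
    rw [hinv, neword_toWord_fstIdx, hk]
  have hb : b ≠ 1 := by
    rintro rfl
    apply ha
    have h' : g * of a * g⁻¹ = 1 := by rw [heq, map_one]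
    have : of a = (1 : CoprodI G) := by
      calc of a = g⁻¹ * (g * of a * g⁻¹) * g := by group
        _ = 1 := by rw [h']; group
    exact of_injective i (by rw [this, map_one])
  set n' : NeWord G j j := (n.append hki (NeWord.singleton a ha)).append (Ne.symm hki) n.inv
    with hn'
  have hprod : n'.prod = of b := by
    rw [hn', NeWord.append_prod, NeWord.append_prod, NeWord.prod_singleton, NeWord.inv_prod,
      hgprod, heq]
  have h3 : (Word.equiv (of b : CoprodI G)).fstIdx = some j := by
    rw [← hprod, equiv_neword_prod, neword_toWord_fstIdx]
  rw [fstIdx_equiv_of hb] at h3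
  exact hji (Option.some.inj h3).symm

theorem decomp (w : Word G) (hw : w ≠ Word.empty) :
    ∃ (j : ι) (m : G j) (w' : Word G), m ≠ 1 ∧ Word.prod w = of m * Word.prod w' ∧
      w'.toList.length + 1 = w.toList.length ∧ w.fstIdx = some j := by
  induction w using Word.consRecOn with
  | empty => exact absurd rfl hw
  | cons i m w h1 h2 ih =>
    exact ⟨i, m, w, h2, by rw [Word.prod_cons], by simp [Word.cons], Word.fstIdx_cons m w h1 h2⟩


theorem inv_length (g : Monoid.CoprodI G) :
    (Word.equiv g⁻¹).toList.length = (Word.equiv g).toList.length := by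
  by_cases hg : g = 1
  · subst hg; rw [inv_one]
  · obtain ⟨j, k, n, hn⟩ := NeWord.of_word (Word.equiv g) (equiv_ne_empty g hg)
    have hgprod : n.prod = g := by rw [← neword_toWord_prod, hn, prod_equiv]
    have hinv : Word.equiv g⁻¹ = n.inv.toWord := by
      rw [← hgprod, ← NeWord.inv_prod, equiv_neword_prod]
    rw [hinv, ← hn]
    exact neword_inv_length n

theorem key {i : ι} : ∀ (N : ℕ) (g : Monoid.CoprodI G),
    (Word.equiv g).toList.length ≤ N →
    ∀ a b : G i, a ≠ 1 → g * of a * g⁻¹ = of b →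
    g ∈ (of : G i →* Monoid.CoprodI G).range := by
  intro N
  induction N with
  | zero =>
    intro g hlen a b ha heq
    have : Word.equiv g = Word.empty := by
      have : (Word.equiv g).toList = [] := List.length_eq_zero_iff.mp (Nat.le_zero.mp hlen)
      exact Word.ext this
    rw [eq_one_of_equiv_empty g this]
    exact one_mem _
  | succ N ih =>
    intro g hlen a b ha heq
    by_cases hg1 : g = 1
    · rw [hg1]; exact one_mem _
    obtain ⟨j, m, w', hm, hprod, hlen', hfst⟩ :=
      decomp (Word.equiv g) (equiv_ne_empty g hg1)
    rw [prod_equiv] at hprod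
    have hw'len : (Word.equiv (Word.prod w')).toList.length ≤ N := by
      rw [equiv_prod]
      omega
    by_cases hj : j = i
    · subst hj
      -- g = of m * g'
      set g' := Word.prod w' with hg'
      have heq' : g' * of a * g'⁻¹ = of (m⁻¹ * b * m) := by
        have : of m * (g' * of a * g'⁻¹) * (of m)⁻¹ = of b := by
          rw [← heq, hprod]; group
        rw [map_mul, map_mul, map_inv, ← this]
        group
      obtain ⟨c, hc⟩ := ih g' hw'len a _ ha heq'
      exact ⟨m * c, by rw [map_mul, hc, ← hprod]⟩
    · have hb : b ≠ 1 := by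
        rintro rfl
        apply ha
        have h' : g * of a * g⁻¹ = 1 := by rw [heq, map_one]
        have : of a = (1 : Monoid.CoprodI G) := by
          calc of a = g⁻¹ * (g * of a * g⁻¹) * g := by group
            _ = 1 := by rw [h']; group
        exact of_injective i (by rw [this, map_one])
      by_cases hk : (Word.equiv g⁻¹).fstIdx = some i
      · -- strip from g⁻¹
        obtain ⟨j₂, m₂, w₂, hm₂, hprod₂, hlen₂, hfst₂⟩ :=
          decomp (Word.equiv g⁻¹) (equiv_ne_empty g⁻¹ (by simp [hg1]))
        rw [prod_equiv] at hprod₂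
        have hj₂ : j₂ = i := by
          rw [hfst₂] at hk
          exact Option.some.inj hk
        subst hj₂
        set g₂ := Word.prod w₂ with hg₂
        have heqi : g⁻¹ * of b * g = of a := by
          rw [← heq]; group
        have hgexp : g = g₂⁻¹ * (of m₂)⁻¹ := by
          rw [← inv_inv g, hprod₂]; group
        have heq₂ : g₂ * of b * g₂⁻¹ = of (m₂⁻¹ * a * m₂) := by
          have : of m₂ * (g₂ * of b * g₂⁻¹) * (of m₂)⁻¹ = of a := by
            rw [← heqi, hprod₂, hgexp]; group
          rw [map_mul, map_mul, map_inv, ← this]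
          group
        have hw₂len : (Word.equiv g₂).toList.length ≤ N := by
          rw [hg₂, equiv_prod]
          have := inv_length g
          omega
        obtain ⟨c, hc⟩ := ih g₂ hw₂len b _ hb heq₂
        refine ⟨(m₂ * c)⁻¹, ?_⟩
        rw [map_inv, map_mul, hc, ← hprod₂, inv_inv]
      · exact absurd heq (core g hg1 (by rw [hfst]; exact fun h => hj (Option.some.inj h)) hk ha)

theorem coprodI_malnormal {i : ι} (g : Monoid.CoprodI G)
    (hg : g ∉ (of : G i →* Monoid.CoprodI G).range) (a b : G i)
    (heq : g * of a * g⁻¹ = of b) : a = 1 := by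
  by_contra ha
  exact hg (key (Word.equiv g).toList.length g le_rfl a b ha heq)

end FPM

section Transfer

universe u v
variable {A : Type u} {B : Type v} [Group A] [Group B]

/-- The two-element family of groups for a binary free product. -/
private def Fam (A : Type u) (B : Type v) : Bool → Type (max u v) :=
  fun b => Bool.rec (ULift.{u} B) (ULift.{v} A) b

private instance famGroup : ∀ b : Bool, Group (Fam A B b) := by
  intro b; cases b
  · exact (inferInstance : Group (ULift B))
  · exact (inferInstance : Group (ULift A))

private def toI : Monoid.Coprod A B →* Monoid.CoprodI (Fam A B) :=
  Monoid.Coprod.lift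
    ((Monoid.CoprodI.of (i := true)).comp (MulEquiv.ulift.symm : A ≃* ULift A).toMonoidHom)
    ((Monoid.CoprodI.of (i := false)).comp (MulEquiv.ulift.symm : B ≃* ULift B).toMonoidHom)

private def ofI : Monoid.CoprodI (Fam A B) →* Monoid.Coprod A B :=
  Monoid.CoprodI.lift
    (fun b => Bool.rec (motive := fun b => Fam A B b →* Monoid.Coprod A B)
      (Monoid.Coprod.inr.comp (MulEquiv.ulift : ULift B ≃* B).toMonoidHom)
      (Monoid.Coprod.inl.comp (MulEquiv.ulift : ULift A ≃* A).toMonoidHom) b)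

private theorem ofI_toI (g : Monoid.Coprod A B) : ofI (toI g) = g := by
  have : (ofI.comp (toI : Monoid.Coprod A B →* _)) = MonoidHom.id _ := by
    apply Monoid.Coprod.hom_ext
    · ext a
      simp [toI, ofI, Monoid.Coprod.lift_apply_inl, Monoid.CoprodI.lift_of,
        MulEquiv.apply_symm_apply]
      rfl
    · ext b
      simp [toI, ofI, Monoid.Coprod.lift_apply_inr, Monoid.CoprodI.lift_of,
        MulEquiv.apply_symm_apply]
      rfl
  exact DFunLike.congr_fun this g

private theorem toI_inl (a : A) :
    toI (Monoid.Coprod.inl a : Monoid.Coprod A B) =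
      Monoid.CoprodI.of (M := Fam A B) (i := true) (ULift.up a) :=
  rfl

end Transfer

/-- In a free product `G = A ∗ B`, the free factor `A` is malnormal:
`A ∩ g⁻¹ A g = {1}` for every `g ∈ G ∖ A`. -/
theorem freeProduct_factor_malnormal {A B : Type*} [Group A] [Group B]
    (g : Monoid.Coprod A B)
    (hg : g ∉ (Monoid.Coprod.inl : A →* Monoid.Coprod A B).range) :
    ∀ x ∈ (Monoid.Coprod.inl : A →* Monoid.Coprod A B).range,
      g * x * g⁻¹ ∈ (Monoid.Coprod.inl : A →* Monoid.Coprod A B).range → x = 1 := by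
  classical
  rintro x ⟨a, rfl⟩ ⟨b, hb⟩
  have hnotin : toI g ∉ (Monoid.CoprodI.of (M := Fam A B) (i := true)).range := by
    rintro ⟨c, hc⟩
    apply hg
    refine ⟨c.down, ?_⟩
    have : toI (Monoid.Coprod.inl c.down : Monoid.Coprod A B) = toI g := by
      rw [toI_inl]; exact congrArg _ rfl |>.trans hc
    calc Monoid.Coprod.inl c.down = ofI (toI (Monoid.Coprod.inl c.down)) := (ofI_toI _).symm
      _ = ofI (toI g) := by rw [this]
      _ = g := ofI_toI g
  have heq : toI g * Monoid.CoprodI.of (M := Fam A B) (i := true) (ULift.up a) * (toI g)⁻¹ =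
      Monoid.CoprodI.of (M := Fam A B) (i := true) (ULift.up b) := by
    rw [← toI_inl, ← toI_inl, ← map_inv, ← map_mul, ← map_mul, hb]
  have := FPM.coprodI_malnormal (toI g) hnotin (ULift.up a) (ULift.up b) heq
  have ha : a = 1 := congrArg ULift.down this
  rw [ha, map_one]
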